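/- The exponential power series exp(X) = ∑_{n≥0} X^n/n! in ℚ⟦X⟧ is not algebraic over ℚ[X]: for any polynomials p_0, …, p_d ∈ ℚ[X], not all zero, the power series ∑_{i=0}^{d} p_i(X)·exp(X)^i is nonzero in ℚ⟦X⟧. -/

import Mathlib

open PowerSeries

lemma my_deriv_exp : d⁄dX ℚ (exp ℚ) = exp ℚ := by
  ext n
  rw [PowerSeries.coeff_derivative, coeff_exp, coeff_exp]
  simp only [eq_ratCast, Rat.cast_div, Rat.cast_one, Rat.cast_natCast]
  rw [Nat.factorial_succ]
  push_cast
  field_simp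

lemma my_deriv_exp_pow (i : ℕ) : d⁄dX ℚ (exp ℚ ^ i) = (i : PowerSeries ℚ) * exp ℚ ^ i := by
  cases i with
  | zero => simp
  | succ i =>
    rw [Derivation.leibniz_pow, my_deriv_exp]
    simp only [Nat.add_sub_cancel, smul_eq_mul, nsmul_eq_mul]
    push_cast
    rw [pow_succ]


lemma exp_pow_ne_zero (i : ℕ) : exp ℚ ^ i ≠ 0 := by
  apply pow_ne_zero
  intro h
  have := constantCoeff_exp (A := ℚ)
  rw [h] at this
  simp at this

lemma ode_zero {c : ℚ} (hc : c ≠ 0) {f : Polynomial ℚ}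
    (h : Polynomial.derivative f + Polynomial.C c * f = 0) : f = 0 := by
  by_contra hf
  rcases eq_or_ne f.natDegree 0 with h0 | h0
  · have hd : Polynomial.derivative f = 0 := by
      rw [Polynomial.eq_C_of_natDegree_eq_zero h0]; simp
    rw [hd, zero_add] at h
    rcases mul_eq_zero.mp h with h' | h'
    · exact hc (by simpa using h')
    · exact hf h'
  · have h1 : (Polynomial.derivative f).natDegree < f.natDegree :=
      Polynomial.natDegree_derivative_lt h0
    have h2 : Polynomial.derivative f = -(Polynomial.C c * f) :=
      eq_neg_of_add_eq_zero_left h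
    rw [h2, Polynomial.natDegree_neg, Polynomial.natDegree_C_mul hc] at h1
    exact lt_irrefl _ h1

lemma qsum (d : ℕ) (p : ℕ → Polynomial ℚ)
    (hsum : ∑ i ∈ Finset.range (d + 1), (p i : PowerSeries ℚ) * exp ℚ ^ i = 0) :
    ∑ i ∈ Finset.range (d + 1),
      ((Polynomial.derivative (p i) + Polynomial.C ((i : ℚ) - (d : ℚ)) * p i : Polynomial ℚ) :
        PowerSeries ℚ) * exp ℚ ^ i = 0 := by
  have h1 := congrArg (d⁄dX ℚ) hsum
  rw [map_sum, map_zero] at h1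
  have h2 : ∀ i ∈ Finset.range (d + 1), (d⁄dX ℚ) ((p i : PowerSeries ℚ) * exp ℚ ^ i)
      = (Polynomial.derivative (p i) : PowerSeries ℚ) * exp ℚ ^ i
        + (C (R := ℚ) (i : ℚ)) * ((p i : PowerSeries ℚ) * exp ℚ ^ i) := by
    intro i _
    rw [Derivation.leibniz, my_deriv_exp_pow, PowerSeries.derivative_coe]
    simp only [smul_eq_mul]
    rw [map_natCast (C (R := ℚ)) i]
    ring
  rw [Finset.sum_congr rfl h2] at h1
  have h3 : ∑ i ∈ Finset.range (d + 1),
      ((Polynomial.derivative (p i) + Polynomial.C ((i : ℚ) - (d : ℚ)) * p i : Polynomial ℚ) :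
        PowerSeries ℚ) * exp ℚ ^ i
      = (∑ i ∈ Finset.range (d + 1),
          ((Polynomial.derivative (p i) : PowerSeries ℚ) * exp ℚ ^ i
            + (C (R := ℚ) (i : ℚ)) * ((p i : PowerSeries ℚ) * exp ℚ ^ i)))
        - (C (R := ℚ) (d : ℚ)) * ∑ i ∈ Finset.range (d + 1), (p i : PowerSeries ℚ) * exp ℚ ^ i := by
    rw [Finset.mul_sum, ← Finset.sum_sub_distrib]
    apply Finset.sum_congr rfl
    intro i _
    rw [Polynomial.coe_add, Polynomial.coe_mul, Polynomial.coe_C, map_sub]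
    ring
  rw [h3, h1, hsum, mul_zero, sub_zero]

lemma key : ∀ (d : ℕ) (p : ℕ → Polynomial ℚ),
    (∑ i ∈ Finset.range (d + 1), (p i : PowerSeries ℚ) * exp ℚ ^ i = 0) → ∀ i ≤ d, p i = 0 := by
  intro d
  induction d with
  | zero =>
    intro p h i hi
    interval_cases i
    simpa [Polynomial.coe_eq_zero_iff] using h
  | succ d ih =>
    suffices h : ∀ N (p : ℕ → Polynomial ℚ), (p (d + 1)).natDegree ≤ N →
        (∑ i ∈ Finset.range (d + 1 + 1), (p i : PowerSeries ℚ) * exp ℚ ^ i = 0) →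
        ∀ i ≤ d + 1, p i = 0 by
      intro p hsum
      exact h _ p le_rfl hsum
    intro N
    induction N with
    | zero =>
      intro p hdeg hsum
      have hderiv0 : Polynomial.derivative (p (d + 1)) = 0 := by
        rw [Polynomial.eq_C_of_natDegree_eq_zero (Nat.le_zero.mp hdeg)]; simp
      by_cases hpz : p (d + 1) = 0
      · have hsum' : ∑ i ∈ Finset.range (d + 1), (p i : PowerSeries ℚ) * exp ℚ ^ i = 0 := by
          rw [Finset.sum_range_succ, hpz] at hsum; simpa using hsum
        intro i hi
        rcases Nat.eq_or_lt_of_le hi with rfl | hlt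
        · exact hpz
        · exact ih p hsum' i (Nat.lt_succ_iff.mp hlt)
      · exfalso
        have hq := qsum (d + 1) p hsum
        have htop : ((Polynomial.derivative (p (d + 1)) +
            Polynomial.C (((d + 1 : ℕ) : ℚ) - ((d + 1 : ℕ) : ℚ)) * p (d + 1) : Polynomial ℚ) :
              PowerSeries ℚ) = 0 := by
          rw [hderiv0]; push_cast; simp
        rw [Finset.sum_range_succ, htop, zero_mul, add_zero] at hq
        have hqz := ih _ hq
        have hpi : ∀ i ≤ d, p i = 0 := by
          intro i hi
          have := hqz i hi
          refine ode_zero (c := (i : ℚ) - ((d + 1 : ℕ) : ℚ)) ?_ this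
          push_cast
          intro hc
          have : (i : ℚ) = (d : ℚ) + 1 := by linarith
          have : i = d + 1 := by exact_mod_cast this
          omega
        rw [Finset.sum_range_succ] at hsum
        have hlow : ∑ i ∈ Finset.range (d + 1), (p i : PowerSeries ℚ) * exp ℚ ^ i = 0 := by
          apply Finset.sum_eq_zero
          intro i hi
          rw [hpi i (Nat.lt_succ_iff.mp (Finset.mem_range.mp hi))]
          simp
        rw [hlow, zero_add] at hsum
        rcases mul_eq_zero.mp hsum with h' | h'
        · exact hpz (Polynomial.coe_eq_zero_iff.mp h')
        · exact exp_pow_ne_zero _ h'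
    | succ N ihN =>
      intro p hdeg hsum
      by_cases hN : (p (d + 1)).natDegree ≤ N
      · exact ihN p hN hsum
      · have hNd : (p (d + 1)).natDegree = N + 1 := by omega
        set q : ℕ → Polynomial ℚ := fun i =>
          Polynomial.derivative (p i) + Polynomial.C ((i : ℚ) - ((d + 1 : ℕ) : ℚ)) * p i with hqdef
        have hq : ∑ i ∈ Finset.range (d + 1 + 1), (q i : PowerSeries ℚ) * exp ℚ ^ i = 0 :=
          qsum (d + 1) p hsum
        have hqdeg : (q (d + 1)).natDegree ≤ N := by
          have : q (d + 1) = Polynomial.derivative (p (d + 1)) := by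
            simp [hqdef]
          rw [this]
          have := Polynomial.natDegree_derivative_lt (p := p (d + 1)) (by omega)
          omega
        have hqz := ihN q hqdeg hq (d + 1) le_rfl
        have : Polynomial.derivative (p (d + 1)) = 0 := by
          have hq2 : q (d + 1) = Polynomial.derivative (p (d + 1)) := by simp [hqdef]
          rw [← hq2, hqz]
        have := Polynomial.natDegree_eq_zero_of_derivative_eq_zero this
        omega

/-- The exponential power series is not algebraic over `ℚ[X]`: no nontrivial polynomial
relation `∑ pᵢ(X) · exp(X)^i = 0` holds in `ℚ⟦X⟧`. -/
theorem stmt3 (d : ℕ) (p : ℕ → Polynomial ℚ) (hp : ∃ i, i ≤ d ∧ p i ≠ 0) :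
    ∑ i ∈ Finset.range (d + 1), (p i : PowerSeries ℚ) * (PowerSeries.exp ℚ) ^ i ≠ 0 := by
  intro h
  obtain ⟨i, hi, hne⟩ := hp
  exact hne (key d p h i hi)
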